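/- Let M_0 ⊆ M_1 ⊆ … ⊆ M_ℓ be a standard ℓ-flag of R-submodules of O. Then 𝔪·M_ℓ ⊆ M_i for every 0 ≤ i ≤ ℓ. Consequently each M_i is uniquely determined by its image M_i/𝔪M_ℓ in M_ℓ/𝔪M_ℓ: if two members of such flags contain 𝔪M_ℓ and have equal images in M_ℓ/𝔪M_ℓ, they coincide. -/

import Mathlib

open PowerSeries

/-- `ν f = n` : the order of the power series `f` equals `n`. -/
def HasOrd {k : Type*} [Semiring k] (f : PowerSeries k) (n : ℕ) : Prop :=
  PowerSeries.coeff n f ≠ 0 ∧ ∀ m < n, PowerSeries.coeff m f = 0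

/-- The set of orders of the nonzero elements of `S ⊆ k[[z]]`. -/
def ValSet {k : Type*} [Semiring k] (S : Set (PowerSeries k)) : Set ℕ :=
  {n | ∃ f ∈ S, HasOrd f n}

/-- The `k`-subspace `𝔪·M` of `O = k[[z]]` spanned by products `r·f` with
`r ∈ 𝔪 = {x ∈ R | ν(x) > 0}` and `f ∈ M`. -/
noncomputable def mMul {k : Type*} [Field k] (R : Subalgebra k (PowerSeries k))
    (M : Submodule k (PowerSeries k)) : Submodule k (PowerSeries k) :=
  Submodule.span k {x | ∃ r ∈ R, PowerSeries.coeff 0 r = 0 ∧ ∃ f ∈ M, x = r * f}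

section Aux

variable {k : Type*} [Field k]

/-- Claim C: an element of `T` vanishing in all degrees `< n` with `g < n`
lies in `S`, when `Δ_T ⊆ Δ_S ∪ {g}` and `S` contains everything of order `≥ N`. -/
private lemma claimC (S T : Submodule k (PowerSeries k)) (hST : S ≤ T) (g N : ℕ)
    (hN : ∀ x : PowerSeries k, (∀ i < N, PowerSeries.coeff i x = 0) → x ∈ S)
    (hΔ : ValSet (T : Set (PowerSeries k)) ⊆ ValSet (S : Set (PowerSeries k)) ∪ {g}) :
    ∀ d n, N ≤ n + d → g < n → ∀ x ∈ T, (∀ i < n, PowerSeries.coeff i x = 0) → x ∈ S := by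
  intro d
  induction d with
  | zero =>
    intro n hn _ x _ hv
    exact hN x fun i hi => hv i (by omega)
  | succ d ih =>
    intro n hn hg x hxT hv
    by_cases hc : PowerSeries.coeff n x = 0
    · refine ih (n + 1) (by omega) (by omega) x hxT fun i hi => ?_
      rcases Nat.lt_or_ge i n with h | h
      · exact hv i h
      · have : i = n := by omega
        rwa [this]
    · have hmem : n ∈ ValSet (T : Set (PowerSeries k)) := ⟨x, hxT, hc, hv⟩
      rcases hΔ hmem with hS | hg'
      · obtain ⟨s, hsS, hs0, hsv⟩ := hS
        set c := PowerSeries.coeff n x / PowerSeries.coeff n s with hc_def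
        have hsub : x - c • s ∈ T := T.sub_mem hxT (T.smul_mem c (hST hsS))
        have hx' : x - c • s ∈ S := by
          refine ih (n + 1) (by omega) (by omega) _ hsub fun i hi => ?_
          rcases Nat.lt_or_ge i n with h | h
          · simp [hv i h, hsv i h]
          · have : i = n := by omega
            subst this
            simp [hc_def, div_mul_cancel₀ _ hs0]
        have hx : x = (x - c • s) + c • s := by ring
        rw [hx]
        exact S.add_mem hx' (S.smul_mem c hsS)
      · simp only [Set.mem_singleton_iff] at hg'
        omega

/-- Claim D: every element of `T` is congruent, modulo a multiple of a fixed
element `h` of order `g`, to an element of `S`. -/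
private lemma claimD (S T : Submodule k (PowerSeries k)) (hST : S ≤ T) (g N : ℕ)
    (hN : ∀ x : PowerSeries k, (∀ i < N, PowerSeries.coeff i x = 0) → x ∈ S)
    (hΔ : ValSet (T : Set (PowerSeries k)) ⊆ ValSet (S : Set (PowerSeries k)) ∪ {g})
    (h : PowerSeries k) (hhT : h ∈ T) (hh : HasOrd h g) :
    ∀ d n, N ≤ n + d → ∀ x ∈ T, (∀ i < n, PowerSeries.coeff i x = 0) →
      ∃ c : k, x - c • h ∈ S := by
  intro d
  induction d with
  | zero =>
    intro n hn x _ hv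
    exact ⟨0, by simpa using hN x fun i hi => hv i (by omega)⟩
  | succ d ih =>
    intro n hn x hxT hv
    by_cases hc : PowerSeries.coeff n x = 0
    · refine ih (n + 1) (by omega) x hxT fun i hi => ?_
      rcases Nat.lt_or_ge i n with h' | h'
      · exact hv i h'
      · have : i = n := by omega
        rwa [this]
    · have hmem : n ∈ ValSet (T : Set (PowerSeries k)) := ⟨x, hxT, hc, hv⟩
      rcases hΔ hmem with hS | hg'
      · obtain ⟨s, hsS, hs0, hsv⟩ := hS
        set c := PowerSeries.coeff n x / PowerSeries.coeff n s with hc_def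
        have hsub : x - c • s ∈ T := T.sub_mem hxT (T.smul_mem c (hST hsS))
        obtain ⟨c', hc'⟩ : ∃ c' : k, (x - c • s) - c' • h ∈ S := by
          refine ih (n + 1) (by omega) _ hsub fun i hi => ?_
          rcases Nat.lt_or_ge i n with h' | h'
          · simp [hv i h', hsv i h']
          · have : i = n := by omega
            subst this
            simp [hc_def, div_mul_cancel₀ _ hs0]
        refine ⟨c', ?_⟩
        have hx : x - c' • h = ((x - c • s) - c' • h) + c • s := by ring
        rw [hx]
        exact S.add_mem hc' (S.smul_mem c hsS)
      · simp only [Set.mem_singleton_iff] at hg'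
        subst hg'
        set c0 := PowerSeries.coeff n x / PowerSeries.coeff n h with hc0_def
        have hsub : x - c0 • h ∈ T := T.sub_mem hxT (T.smul_mem c0 hhT)
        obtain ⟨c', hc'⟩ : ∃ c' : k, (x - c0 • h) - c' • h ∈ S := by
          refine ih (n + 1) (by omega) _ hsub fun i hi => ?_
          rcases Nat.lt_or_ge i n with h' | h'
          · simp [hv i h', hh.2 i h']
          · have : i = n := by omega
            subst this
            simp [hc0_def, div_mul_cancel₀ _ hh.1]
        refine ⟨c0 + c', ?_⟩
        have hx : x - (c0 + c') • h = (x - c0 • h) - c' • h := by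
          rw [add_smul]; ring
        rwa [hx]

end Aux

theorem flag_contains_mMul_top
    {k : Type*} [Field k]
    (R : Subalgebra k (PowerSeries k)) (m : ℕ) (hm : 1 ≤ m)
    (hRm : ∀ f : PowerSeries k, PowerSeries.X ^ m * f ∈ R)
    (ℓ : ℕ) (M : Fin (ℓ + 1) → Submodule k (PowerSeries k)) (g : Fin ℓ → ℕ)
    (hstab : ∀ i, ∀ r ∈ R, ∀ f ∈ M i, r * f ∈ M i)
    (hchain : ∀ j : Fin ℓ, M j.castSucc ≤ M j.succ)
    (hstd : ValSet (R : Set (PowerSeries k)) ⊆ ValSet (M 0 : Set (PowerSeries k)))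
    (hΔ : ∀ j : Fin ℓ,
      ValSet (M j.succ : Set (PowerSeries k))
        = ValSet (M j.castSucc : Set (PowerSeries k)) ∪ {g j})
    (hg : StrictMono g) :
    (∀ i : Fin (ℓ + 1), mMul R (M (Fin.last ℓ)) ≤ M i) ∧
    (∀ N N' : Submodule k (PowerSeries k),
      mMul R (M (Fin.last ℓ)) ≤ N → mMul R (M (Fin.last ℓ)) ≤ N' →
      N ≤ M (Fin.last ℓ) → N' ≤ M (Fin.last ℓ) →
      Submodule.map (mMul R (M (Fin.last ℓ))).mkQ N
        = Submodule.map (mMul R (M (Fin.last ℓ))).mkQ N' →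
      N = N') := by
  -- monotonicity of the flag from `M 0`
  have hmono0 : ∀ j : Fin (ℓ + 1), M 0 ≤ M j := by
    intro j
    induction j using Fin.induction with
    | zero => exact le_refl _
    | succ i ih => exact le_trans ih (hchain i)
  -- `M 0` contains everything of order `≥ 2m`
  set N : ℕ := 2 * m with hN_def
  have hzN : ∀ x : PowerSeries k, (∀ i < N, PowerSeries.coeff i x = 0) → x ∈ M 0 := by
    -- first get an element of order `m` in `M 0`
    have hXm : (PowerSeries.X : PowerSeries k) ^ m ∈ R := by
      have := hRm 1; rwa [mul_one] at this
    have hmVal : m ∈ ValSet (R : Set (PowerSeries k)) :=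
      ⟨PowerSeries.X ^ m, hXm, by simp [PowerSeries.coeff_X_pow],
        fun i hi => by simp [PowerSeries.coeff_X_pow, Nat.ne_of_lt hi]⟩
    obtain ⟨f₀, hf₀M, hf₀c, hf₀v⟩ := hstd hmVal
    obtain ⟨u, hu⟩ : (PowerSeries.X : PowerSeries k) ^ m ∣ f₀ :=
      PowerSeries.X_pow_dvd_iff.mpr hf₀v
    have hu0 : PowerSeries.coeff 0 u ≠ 0 := by
      intro h0
      apply hf₀c
      rw [hu]
      simpa using (PowerSeries.coeff_X_pow_mul u m 0).trans h0
    have huu : IsUnit u := by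
      rw [PowerSeries.isUnit_iff_constantCoeff]
      simpa [PowerSeries.coeff_zero_eq_constantCoeff] using hu0
    obtain ⟨v, hv⟩ : ∃ v : PowerSeries k, u * v = 1 := by
      obtain ⟨w, hw⟩ := huu
      exact ⟨(↑w⁻¹ : PowerSeries k), by rw [← hw]; exact w.mul_inv⟩
    intro x hx
    obtain ⟨w, hw⟩ : (PowerSeries.X : PowerSeries k) ^ N ∣ x :=
      PowerSeries.X_pow_dvd_iff.mpr hx
    have hxeq : x = (PowerSeries.X ^ m * (v * w)) * f₀ := by
      rw [hu, hw]
      calc PowerSeries.X ^ N * w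
          = (PowerSeries.X ^ m * PowerSeries.X ^ m * w) * 1 := by
            rw [mul_one, ← pow_add, hN_def]; ring_nf
        _ = (PowerSeries.X ^ m * PowerSeries.X ^ m * w) * (u * v) := by rw [hv]
        _ = PowerSeries.X ^ m * (v * w) * (PowerSeries.X ^ m * u) := by ring
    rw [hxeq]
    exact hstab 0 _ (hRm (v * w)) f₀ hf₀M
  -- an element of any `M j` vanishing below `n`, with all relevant `g i < n`, is in `M 0`
  have hinner : ∀ j : Fin (ℓ + 1), ∀ n : ℕ,
      (∀ i : Fin ℓ, (i : ℕ) < (j : ℕ) → g i < n) →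
      ∀ x ∈ M j, (∀ i < n, PowerSeries.coeff i x = 0) → x ∈ M 0 := by
    intro j
    induction j using Fin.induction with
    | zero => intro n _ x hx _; exact hx
    | succ j ih =>
      intro n hgs x hxT hv
      have hgj : g j < n := hgs j (by simp)
      have hx' : x ∈ M j.castSucc := by
        refine claimC (M j.castSucc) (M j.succ) (hchain j) (g j) N
          (fun y hy => hmono0 _ (hzN y hy)) (le_of_eq (hΔ j)) N n (by omega) hgj x hxT hv
      refine ih n (fun i hi => hgs i ?_) x hx' hv
      simp only [Fin.coe_castSucc] at hi ⊢
      rw [Fin.val_succ]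
      omega
  -- main claim: for `r ∈ 𝔪 ∩ R` and `f ∈ M j`, `r * f ∈ M 0`
  have hkey : ∀ r ∈ R, PowerSeries.coeff 0 r = 0 →
      ∀ j : Fin (ℓ + 1), ∀ f ∈ M j, r * f ∈ M 0 := by
    intro r hrR hr0 j
    induction j using Fin.induction with
    | zero => intro f hf; exact hstab 0 r hrR f hf
    | succ j ih =>
      intro f hf
      -- get an element `h` of order `g j` in `M j.succ`
      have hgmem : g j ∈ ValSet (M j.succ : Set (PowerSeries k)) := by
        rw [hΔ j]; exact Or.inr rfl
      obtain ⟨h, hhT, hh⟩ := hgmem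
      -- decompose `f`
      obtain ⟨c, hc⟩ := claimD (M j.castSucc) (M j.succ) (hchain j) (g j) N
        (fun y hy => hmono0 _ (hzN y hy)) (le_of_eq (hΔ j)) h hhT hh N 0 (by omega)
        f hf (fun i hi => absurd hi (by omega))
      -- `r * h` vanishes up to degree `g j` and lies in `M j.succ`
      have hrh_mem : r * h ∈ M j.succ := hstab _ r hrR h hhT
      have hrh_v : ∀ i < g j + 1, PowerSeries.coeff i (r * h) = 0 := by
        intro i hi
        rw [PowerSeries.coeff_mul]
        apply Finset.sum_eq_zero
        intro p hp
        rw [Finset.HasAntidiagonal.mem_antidiagonal] at hp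
        rcases Nat.eq_zero_or_pos p.1 with h0 | h0
        · rw [h0] at hp ⊢
          rw [hr0, zero_mul]
        · rw [hh.2 p.2 (by omega), mul_zero]
      have hrh0 : r * h ∈ M 0 := by
        refine hinner j.succ (g j + 1) (fun i hi => ?_) (r * h) hrh_mem hrh_v
        have : (i : ℕ) ≤ (j : ℕ) := by
          rw [Fin.val_succ] at hi; omega
        have : g i ≤ g j := by
          rcases eq_or_lt_of_le this with he | hl
          · exact le_of_eq (congrArg g (Fin.ext he))
          · exact le_of_lt (hg hl)
        omega
      have h1 : r * (f - c • h) ∈ M 0 := ih (f - c • h) hc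
      have hre : r * f = r * (f - c • h) + c • (r * h) := by
        rw [mul_sub, mul_smul_comm]; ring
      rw [hre]
      exact (M 0).add_mem h1 ((M 0).smul_mem c hrh0)
  constructor
  · intro i
    rw [mMul, Submodule.span_le]
    rintro x ⟨r, hrR, hr0, f, hf, rfl⟩
    exact hmono0 i (hkey r hrR hr0 (Fin.last ℓ) f hf)
  · intro N' N'' hN' hN'' _ _ heq
    calc N' = mMul R (M (Fin.last ℓ)) ⊔ N' := (sup_eq_right.mpr hN').symm
      _ = mMul R (M (Fin.last ℓ)) ⊔ N'' := by
          rw [← Submodule.comap_map_mkQ (mMul R (M (Fin.last ℓ))) N', heq,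
            Submodule.comap_map_mkQ]
      _ = N'' := sup_eq_right.mpr hN''
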